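/- With γ_{α,λ} as above and B(0, r) ⊆ K, for every ξ ∈ ℝ^N one has Dγ_{α,λ}(ξ) · ξ ≥ (1 + d_K²(ξ)∧λ²)^{1/(2α)-1/2} d_K²(ξ) and Dγ_{α,λ}(ξ) · ξ ≥ r (1 + d_K²(ξ)∧λ²)^{1/(2α)-1/2} d_K(ξ) = r |Dγ_{α,λ}(ξ)|. -/

import Mathlib

open scoped RealInnerProductSpace

set_option maxHeartbeats 1000000 in
/-- Inequalities for the gradient of the Norton–Hoff potential:
`Dγ_{α,λ}(ξ)·ξ ≥ (1 + d²∧λ²)^{1/(2α)-1/2} d²` and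
`Dγ_{α,λ}(ξ)·ξ ≥ r (1 + d²∧λ²)^{1/(2α)-1/2} d = r |Dγ_{α,λ}(ξ)|` when `B(0,r) ⊆ K`. -/
theorem stmt11 {N : ℕ} (α lam r : ℝ) (hα : α ∈ Set.Ioc (0 : ℝ) 1) (hlam : 0 < lam)
    (hr : 0 < r)
    (K : Set (EuclideanSpace ℝ (Fin N))) (hKc : IsClosed K) (hKconv : Convex ℝ K)
    (hball : Metric.closedBall 0 r ⊆ K)
    (P : EuclideanSpace ℝ (Fin N) → EuclideanSpace ℝ (Fin N))
    (hPmem : ∀ x, P x ∈ K)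
    (hPnear : ∀ x, ∀ y ∈ K, ‖x - P x‖ ≤ ‖x - y‖)
    (ξ : EuclideanSpace ℝ (Fin N)) :
    ((1 + min (Metric.infDist ξ K ^ 2) (lam ^ 2)) ^ (1 / (2 * α) - 1 / 2)) *
        Metric.infDist ξ K ^ 2 ≤
      ⟪((1 + min (Metric.infDist ξ K ^ 2) (lam ^ 2)) ^ (1 / (2 * α) - 1 / 2)) • (ξ - P ξ), ξ⟫ ∧
    r * (((1 + min (Metric.infDist ξ K ^ 2) (lam ^ 2)) ^ (1 / (2 * α) - 1 / 2)) *
        Metric.infDist ξ K) ≤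
      ⟪((1 + min (Metric.infDist ξ K ^ 2) (lam ^ 2)) ^ (1 / (2 * α) - 1 / 2)) • (ξ - P ξ), ξ⟫ ∧
    r * (((1 + min (Metric.infDist ξ K ^ 2) (lam ^ 2)) ^ (1 / (2 * α) - 1 / 2)) *
        Metric.infDist ξ K) =
      r * ‖((1 + min (Metric.infDist ξ K ^ 2) (lam ^ 2)) ^ (1 / (2 * α) - 1 / 2)) • (ξ - P ξ)‖ := by
  have h0K : (0 : EuclideanSpace ℝ (Fin N)) ∈ K := hball (by simp [hr.le])
  have hne : K.Nonempty := ⟨0, h0K⟩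
  set c : ℝ := (1 + min (Metric.infDist ξ K ^ 2) (lam ^ 2)) ^ (1 / (2 * α) - 1 / 2) with hc
  have hbase : (0:ℝ) < 1 + min (Metric.infDist ξ K ^ 2) (lam ^ 2) := by positivity
  have hcpos : 0 < c := Real.rpow_pos_of_pos hbase _
  set d : ℝ := Metric.infDist ξ K with hdd
  have hd : d = ‖ξ - P ξ‖ := by
    apply le_antisymm
    · calc d ≤ dist ξ (P ξ) := Metric.infDist_le_dist_of_mem (hPmem ξ)
        _ = ‖ξ - P ξ‖ := dist_eq_norm _ _
    · by_contra h
      push_neg at h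
      rw [hdd] at h
      obtain ⟨y, hy, hlt⟩ := (Metric.infDist_lt_iff hne).1 h
      rw [dist_eq_norm] at hlt
      exact absurd (hPnear ξ y hy) (not_le.2 hlt)
  -- variational inequality
  haveI : Nonempty K := hne.to_subtype
  have hiInf : ‖ξ - P ξ‖ = ⨅ w : K, ‖ξ - (w : EuclideanSpace ℝ (Fin N))‖ := by
    apply le_antisymm
    · exact le_ciInf fun w => hPnear ξ w w.2
    · have hb : BddBelow (Set.range fun w : K => ‖ξ - (w : EuclideanSpace ℝ (Fin N))‖) := by
        refine ⟨0, ?_⟩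
        rintro x ⟨w, rfl⟩
        positivity
      exact ciInf_le hb ⟨P ξ, hPmem ξ⟩
  have hvar : ∀ w ∈ K, ⟪ξ - P ξ, w - P ξ⟫ ≤ 0 :=
    (norm_eq_iInf_iff_real_inner_le_zero hKconv (hPmem ξ)).1 hiInf
  -- key inner product bound
  have hkey : d ^ 2 + r * d ≤ ⟪ξ - P ξ, ξ⟫ := by
    rcases eq_or_ne (ξ - P ξ) 0 with h0 | h0
    · have : d = 0 := by rw [hd, h0, norm_zero]
      simp [h0, this]
    · set u : EuclideanSpace ℝ (Fin N) := (r / ‖ξ - P ξ‖) • (ξ - P ξ) with hu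
      have hnorm : ‖ξ - P ξ‖ ≠ 0 := norm_ne_zero_iff.2 h0
      have huK : u ∈ K := by
        apply hball
        simp only [Metric.mem_closedBall, dist_zero_right, hu, norm_smul]
        rw [Real.norm_eq_abs, abs_div, abs_of_pos hr, abs_of_nonneg (norm_nonneg _)]
        field_simp
        exact le_rfl
      have h1 := hvar u huK
      have h2 : ⟪ξ - P ξ, u⟫ = r * ‖ξ - P ξ‖ := by
        rw [hu, real_inner_smul_right, real_inner_self_eq_norm_sq]
        field_simp
      have h3 : ⟪ξ - P ξ, ξ⟫ = ‖ξ - P ξ‖ ^ 2 + ⟪ξ - P ξ, P ξ⟫ := by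
        rw [← real_inner_self_eq_norm_sq]
        rw [← inner_add_right]
        congr 1
        abel
      have h4 : r * ‖ξ - P ξ‖ ≤ ⟪ξ - P ξ, P ξ⟫ := by
        have := hvar u huK
        rw [inner_sub_right, h2] at this
        linarith
      rw [h3, ← hd] at *
      nlinarith
  have hdnn : 0 ≤ d := Metric.infDist_nonneg
  have hinner : ⟪c • (ξ - P ξ), ξ⟫ = c * ⟪ξ - P ξ, ξ⟫ := real_inner_smul_left _ _ _
  refine ⟨?_, ?_, ?_⟩
  · rw [hinner]
    have : d ^ 2 ≤ ⟪ξ - P ξ, ξ⟫ := by nlinarith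
    nlinarith
  · rw [hinner]
    have : r * d ≤ ⟪ξ - P ξ, ξ⟫ := by nlinarith
    nlinarith
  · rw [norm_smul, Real.norm_eq_abs, abs_of_pos hcpos, ← hd]
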